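/- Let P be the Type A_n root poset, realized as {(i,j) : 1 ≤ i,j ≤ n, i+j ≥ n+1} with componentwise order. For each 1 ≤ i ≤ n and every order ideal I of P, the rook statistic R_i(I) := T⁺_{i,n+1−i}(I) + Σ_{i'≥i, j'≥n+1−i} T⁻_{i',j'}(I) − Σ_{i'>i, j'>n+1−i} T⁺_{i',j'}(I) equals 1 (where statistics at (i',j') ∉ P are taken to be 0). -/

import Mathlib

open scoped Classical
open Finset

variable {P : Type*} [Fintype P] [PartialOrder P]

/-- `I` is an order ideal (downward-closed subset) of the finite poset `P`. -/
def IsIdeal (I : Finset P) : Prop := ∀ ⦃x y : P⦄, x ≤ y → y ∈ I → x ∈ I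

/-- `p` is a minimal element of the complement `P \ I`. -/
def CanTogIn (I : Finset P) (p : P) : Prop := p ∉ I ∧ ∀ q, q < p → q ∈ I

/-- `p` is a maximal element of `I`. -/
def CanTogOut (I : Finset P) (p : P) : Prop := p ∈ I ∧ ∀ q, p < q → q ∉ I

/-- Rowmotion: the order ideal generated by the minimal elements of `P \ I`. -/
noncomputable def rowmotion (I : Finset P) : Finset P :=
  univ.filter fun x => ∃ y, CanTogIn I y ∧ x ≤ y

/-- Toggleability statistic `T⁺_p`. -/
noncomputable def Tin (p : P) (I : Finset P) : ℝ := if CanTogIn I p then 1 else 0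

/-- Toggleability statistic `T⁻_p`. -/
noncomputable def Tout (p : P) (I : Finset P) : ℝ := if CanTogOut I p then 1 else 0

/-- Signed toggleability statistic `T_p = T⁺_p - T⁻_p`. -/
noncomputable def Tsgn (p : P) (I : Finset P) : ℝ := Tin p I - Tout p I

/-- The Type `A_n` root poset, realized as `{(i,j) : 1 ≤ i,j ≤ n, i+j ≥ n+1}`
with componentwise order (coordinates taken in `Fin (n+1)`, i.e. `0,…,n`). -/
abbrev RootA (n : ℕ) :=
  {p : Fin (n + 1) × Fin (n + 1) // 1 ≤ p.1.val ∧ 1 ≤ p.2.val ∧ n + 1 ≤ p.1.val + p.2.val}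

namespace RookAux

variable {n : ℕ}

lemma le_iff (p q : RootA n) : p ≤ q ↔ p.1.1.val ≤ q.1.1.val ∧ p.1.2.val ≤ q.1.2.val := by
  rw [← Subtype.coe_le_coe, Prod.le_def, Fin.le_def, Fin.le_def]

lemma ext' (p q : RootA n) (h1 : p.1.1.val = q.1.1.val) (h2 : p.1.2.val = q.1.2.val) : p = q := by
  apply Subtype.ext; exact Prod.ext (Fin.ext h1) (Fin.ext h2)

lemma lt_iff (p q : RootA n) :
    p < q ↔ (p.1.1.val ≤ q.1.1.val ∧ p.1.2.val ≤ q.1.2.val) ∧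
      ¬(p.1.1.val = q.1.1.val ∧ p.1.2.val = q.1.2.val) := by
  rw [lt_iff_le_and_ne, le_iff]
  constructor
  · rintro ⟨h, hne⟩
    exact ⟨h, fun he => hne (ext' p q he.1 he.2)⟩
  · rintro ⟨h, hne⟩
    exact ⟨h, fun he => hne ⟨by rw [he], by rw [he]⟩⟩

/-- The element of `RootA n` with coordinates `(x, y)`. -/
def elt (n x y : ℕ) (h1 : 1 ≤ x) (h2 : x ≤ n) (h3 : 1 ≤ y) (h4 : y ≤ n)
    (h5 : n + 1 ≤ x + y) : RootA n :=
  ⟨(⟨x, by omega⟩, ⟨y, by omega⟩), ⟨h1, h3, h5⟩⟩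

@[simp] lemma elt_fst (n x y h1 h2 h3 h4 h5) : (elt n x y h1 h2 h3 h4 h5).1.1.val = x := rfl
@[simp] lemma elt_snd (n x y h1 h2 h3 h4 h5) : (elt n x y h1 h2 h3 h4 h5).1.2.val = y := rfl

/-- membership of the point with coordinates `(x,y)` in `I`. -/
def M (n : ℕ) (I : Finset (RootA n)) (x y : ℕ) : Prop :=
  ∃ p ∈ I, p.1.1.val = x ∧ p.1.2.val = y

variable {I : Finset (RootA n)}

lemma M_bounds {x y : ℕ} (h : M n I x y) :
    1 ≤ x ∧ x ≤ n ∧ 1 ≤ y ∧ y ≤ n ∧ n + 1 ≤ x + y := by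
  obtain ⟨p, _, hx, hy⟩ := h
  have b1 := p.2.1; have b2 := p.2.2.1; have b3 := p.2.2.2
  have c1 := p.1.1.isLt; have c2 := p.1.2.isLt
  omega

lemma mem_of_M {x y : ℕ} (h : M n I x y) (h1 h2 h3 h4 h5) :
    elt n x y h1 h2 h3 h4 h5 ∈ I := by
  obtain ⟨p, hp, hx, hy⟩ := h
  have : elt n x y h1 h2 h3 h4 h5 = p := ext' _ _ (by simp [hx]) (by simp [hy])
  rwa [this]

lemma M_of_mem (p : RootA n) (hp : p ∈ I) : M n I p.1.1.val p.1.2.val := ⟨p, hp, rfl, rfl⟩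

/-- Downward closure in coordinates. -/
lemma M_mono (hI : IsIdeal I) {x y x' y' : ℕ} (h : M n I x y)
    (g1 : 1 ≤ x') (g3 : 1 ≤ y') (g5 : n + 1 ≤ x' + y') (hx : x' ≤ x) (hy : y' ≤ y) :
    M n I x' y' := by
  obtain ⟨b1, b2, b3, b4, b5⟩ := M_bounds h
  have hq : elt n x' y' g1 (by omega) g3 (by omega) g5 ∈ I := by
    apply hI ((le_iff _ _).2 ⟨by simpa using hx, by simpa using hy⟩)
      (mem_of_M h b1 b2 b3 b4 b5)
  exact M_of_mem _ hq

lemma canTogOut_iff (hI : IsIdeal I) (p : RootA n) :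
    CanTogOut I p ↔ M n I p.1.1.val p.1.2.val ∧ ¬ M n I (p.1.1.val + 1) p.1.2.val ∧
      ¬ M n I p.1.1.val (p.1.2.val + 1) := by
  set x := p.1.1.val with hxdef
  set y := p.1.2.val with hydef
  have hb := p.2
  constructor
  · rintro ⟨hpI, hmax⟩
    refine ⟨M_of_mem p hpI, ?_, ?_⟩
    · intro h
      obtain ⟨b1, b2, b3, b4, b5⟩ := M_bounds h
      have hq := mem_of_M h b1 b2 b3 b4 b5
      exact hmax _ ((lt_iff p _).2 ⟨⟨by simp; omega, by simp; omega⟩, by simp; omega⟩) hq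
    · intro h
      obtain ⟨b1, b2, b3, b4, b5⟩ := M_bounds h
      have hq := mem_of_M h b1 b2 b3 b4 b5
      exact hmax _ ((lt_iff p _).2 ⟨⟨by simp; omega, by simp; omega⟩, by simp; omega⟩) hq
  · rintro ⟨hm, h1, h2⟩
    obtain ⟨b1, b2, b3, b4, b5⟩ := M_bounds hm
    refine ⟨mem_of_M hm b1 b2 b3 b4 b5, ?_⟩
    intro q hq hqI
    rw [lt_iff] at hq
    obtain ⟨⟨hq1, hq2⟩, hne⟩ := hq
    have hqb := q.2
    have hqlt1 := q.1.1.isLt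
    have hqlt2 := q.1.2.isLt
    by_cases hc : x + 1 ≤ q.1.1.val
    · exact h1 (M_mono hI (M_of_mem q hqI) (by omega) b3 (by omega) hc hq2)
    · have hc2 : y + 1 ≤ q.1.2.val := by omega
      exact h2 (M_mono hI (M_of_mem q hqI) b1 (by omega) (by omega) hq1 hc2)

lemma canTogIn_iff (hI : IsIdeal I) (p : RootA n)
    (hx : 2 ≤ p.1.1.val) (hy : 2 ≤ p.1.2.val) (hs : n + 2 ≤ p.1.1.val + p.1.2.val) :
    CanTogIn I p ↔ ¬ M n I p.1.1.val p.1.2.val ∧ M n I (p.1.1.val - 1) p.1.2.val ∧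
      M n I p.1.1.val (p.1.2.val - 1) := by
  set x := p.1.1.val with hxdef
  set y := p.1.2.val with hydef
  have hb := p.2
  have hlt1 := p.1.1.isLt
  have hlt2 := p.1.2.isLt
  constructor
  · rintro ⟨hpI, hmin⟩
    refine ⟨fun h => hpI (mem_of_M h (by omega) (by omega) (by omega) (by omega) (by omega)), ?_, ?_⟩
    · have hq : elt n (x-1) y (by omega) (by omega) (by omega) (by omega) (by omega) ∈ I :=
        hmin _ ((lt_iff _ _).2 ⟨⟨by simp; omega, by simp; omega⟩, by simp; omega⟩)
      exact M_of_mem _ hq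
    · have hq : elt n x (y-1) (by omega) (by omega) (by omega) (by omega) (by omega) ∈ I :=
        hmin _ ((lt_iff _ _).2 ⟨⟨by simp; omega, by simp; omega⟩, by simp; omega⟩)
      exact M_of_mem _ hq
  · rintro ⟨hm, h1, h2⟩
    constructor
    · intro hpI; exact hm (M_of_mem p hpI)
    · intro q hq
      rw [lt_iff] at hq
      obtain ⟨⟨hq1, hq2⟩, hne⟩ := hq
      have hqb := q.2
      by_cases hc : q.1.1.val ≤ x - 1
      · have := M_mono hI h1 (by omega) (by omega) (by omega) hc hq2
        exact mem_of_M this (by omega) (by omega) (by omega) (by omega) (by omega)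
      · have hxq : q.1.1.val = x := by omega
        have hyc : q.1.2.val ≤ y - 1 := by omega
        have := M_mono hI h2 (by omega) (by omega) (by omega) (le_of_eq hxq) hyc
        exact mem_of_M this (by omega) (by omega) (by omega) (by omega) (by omega)

/-- On the diagonal, `p` is minimal. -/
lemma canTogIn_diag_iff (p : RootA n) (hs : p.1.1.val + p.1.2.val = n + 1) :
    CanTogIn I p ↔ ¬ M n I p.1.1.val p.1.2.val := by
  constructor
  · rintro ⟨hpI, -⟩ hm
    exact hpI (mem_of_M hm p.2.1 (by have := p.1.1.isLt; omega) p.2.2.1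
      (by have := p.1.2.isLt; omega) (by omega))
  · intro hm
    refine ⟨fun h => hm (M_of_mem p h), ?_⟩
    intro q hq
    rw [lt_iff] at hq
    obtain ⟨⟨hq1, hq2⟩, hne⟩ := hq
    have hqb := q.2
    exact absurd ⟨by omega, by omega⟩ hne

end RookAux

namespace RookAux
variable {n : ℕ} {I : Finset (RootA n)}

noncomputable def F (n : ℕ) (I : Finset (RootA n)) (x y : ℕ) : ℝ :=
  if (M n I x y ∧ ¬ M n I (x+1) y ∧ ¬ M n I x (y+1)) then 1 else 0

noncomputable def G (n : ℕ) (I : Finset (RootA n)) (x y : ℕ) : ℝ :=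
  if (¬ M n I x y ∧ M n I (x-1) y ∧ M n I x (y-1)) then 1 else 0

noncomputable def H (n : ℕ) (I : Finset (RootA n)) (x y : ℕ) : ℝ :=
  if (M n I x y ∧ ¬ M n I (x+1) y) then 1 else 0

lemma M_top (y : ℕ) : ¬ M n I (n+1) y := fun h => by have := (M_bounds h).2.1; omega
lemma M_right (x : ℕ) : ¬ M n I x (n+1) := fun h => by have := (M_bounds h).2.2.2.1; omega

lemma G_top (y : ℕ) : G n I (n+1) y = 0 :=
  if_neg (by rintro ⟨-, -, h⟩; have := (M_bounds h).2.1; omega)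

lemma G_right (x : ℕ) : G n I x (n+1) = 0 :=
  if_neg (by rintro ⟨-, h, -⟩; have := (M_bounds h).2.2.2.1; omega)

lemma H_right (x : ℕ) : H n I x (n+1) = 0 :=
  if_neg (by rintro ⟨h, -⟩; exact M_right x h)

lemma Tout_eq (hI : IsIdeal I) (p : RootA n) :
    Tout p I = F n I p.1.1.val p.1.2.val := by
  rw [Tout, F, if_congr (canTogOut_iff hI p) rfl rfl]

lemma Tin_eq (hI : IsIdeal I) (p : RootA n)
    (hx : 2 ≤ p.1.1.val) (hy : 2 ≤ p.1.2.val) (hs : n + 2 ≤ p.1.1.val + p.1.2.val) :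
    Tin p I = G n I p.1.1.val p.1.2.val := by
  rw [Tin, G, if_congr (canTogIn_iff hI p hx hy hs) rfl rfl]

lemma key (hI : IsIdeal I) {x y : ℕ} (hx : 1 ≤ x) (hy : 1 ≤ y) (hxy : n + 1 ≤ x + y) :
    F n I x y - G n I (x+1) (y+1) = H n I x y - H n I x (y+1) := by
  have i1 : M n I (x+1) y → M n I x y := fun h =>
    M_mono hI h hx hy hxy (by omega) le_rfl
  have i2 : M n I x (y+1) → M n I x y := fun h =>
    M_mono hI h hx hy hxy le_rfl (by omega)
  have i3 : M n I (x+1) (y+1) → M n I (x+1) y := fun h =>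
    M_mono hI h (by omega) hy (by omega) le_rfl (by omega)
  have i4 : M n I (x+1) (y+1) → M n I x (y+1) := fun h =>
    M_mono hI h hx (by omega) (by omega) (by omega) le_rfl
  rw [F, G, H, H]
  have e1 : x + 1 - 1 = x := by omega
  have e2 : y + 1 - 1 = y := by omega
  rw [e1, e2]
  by_cases u : M n I x y <;> by_cases v : M n I (x+1) y <;>
    by_cases w : M n I x (y+1) <;> by_cases z : M n I (x+1) (y+1) <;>
    simp_all

lemma H_eq (hI : IsIdeal I) {x y : ℕ} (hx : 1 ≤ x) (hy : 1 ≤ y) (hxy : n + 1 ≤ x + y) :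
    H n I x y = (if M n I x y then (1:ℝ) else 0) - (if M n I (x+1) y then 1 else 0) := by
  have i1 : M n I (x+1) y → M n I x y := fun h =>
    M_mono hI h hx hy hxy (by omega) le_rfl
  rw [H]
  by_cases u : M n I x y <;> by_cases v : M n I (x+1) y <;> simp_all

end RookAux

open RookAux in
theorem rootA_rook_eq_one (n i : ℕ) (hi1 : 1 ≤ i) (hi2 : i ≤ n)
    (I : Finset (RootA n)) (hI : IsIdeal I) :
    Tin (⟨(⟨i, by omega⟩, ⟨n + 1 - i, by omega⟩), by
        refine ⟨?_, ?_, ?_⟩ <;> simp <;> omega⟩ : RootA n) I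
      + (∑ p ∈ univ.filter (fun p : RootA n =>
            i ≤ p.1.1.val ∧ n + 1 - i ≤ p.1.2.val), Tout p I)
      - (∑ p ∈ univ.filter (fun p : RootA n =>
            i < p.1.1.val ∧ n + 1 - i < p.1.2.val), Tin p I) = 1 := by
  classical
  set b := n + 1 - i with hbdef
  have hb1 : 1 ≤ b := by omega
  have hb2 : b ≤ n := by omega
  have hab : i + b = n + 1 := by omega
  -- Step 1: the diagonal Tin term
  have hT : Tin (⟨(⟨i, by omega⟩, ⟨n + 1 - i, by omega⟩), by
        refine ⟨?_, ?_, ?_⟩ <;> simp <;> omega⟩ : RootA n) I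
      = (if M n I i b then 0 else 1) := by
    rw [Tin, if_congr (canTogIn_diag_iff (I := I) _ (by simp; omega)) rfl rfl]
    by_cases h : M n I i b <;> simp_all [hbdef]
  -- Step 2: reindex the Tout sum
  have hS1 : (∑ p ∈ univ.filter (fun p : RootA n =>
            i ≤ p.1.1.val ∧ n + 1 - i ≤ p.1.2.val), Tout p I)
      = ∑ z ∈ Icc i n ×ˢ Icc b n, F n I z.1 z.2 := by
    refine Finset.sum_bij' (fun p _ => (p.1.1.val, p.1.2.val))
      (fun z hz => RookAux.elt n z.1 z.2
        (by simp only [Finset.mem_product, Finset.mem_Icc] at hz; omega)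
        (by simp only [Finset.mem_product, Finset.mem_Icc] at hz; omega)
        (by simp only [Finset.mem_product, Finset.mem_Icc] at hz; omega)
        (by simp only [Finset.mem_product, Finset.mem_Icc] at hz; omega)
        (by simp only [Finset.mem_product, Finset.mem_Icc] at hz; omega))
      ?_ ?_ ?_ ?_ ?_
    · intro p hp
      simp only [Finset.mem_filter, Finset.mem_univ, true_and] at hp
      have h1 := p.1.1.isLt; have h2 := p.1.2.isLt
      simp only [Finset.mem_product, Finset.mem_Icc]
      omega
    · intro z hz
      simp only [Finset.mem_product, Finset.mem_Icc] at hz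
      simp only [Finset.mem_filter, Finset.mem_univ, true_and, elt_fst, elt_snd]
      omega
    · intro p hp
      exact ext' _ _ (by simp) (by simp)
    · intro z hz
      simp
    · intro p hp
      exact Tout_eq hI p
  -- Step 3: reindex the Tin sum
  have hS2 : (∑ p ∈ univ.filter (fun p : RootA n =>
            i < p.1.1.val ∧ n + 1 - i < p.1.2.val), Tin p I)
      = ∑ z ∈ Icc (i+1) n ×ˢ Icc (b+1) n, G n I z.1 z.2 := by
    refine Finset.sum_bij' (fun p _ => (p.1.1.val, p.1.2.val))
      (fun z hz => RookAux.elt n z.1 z.2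
        (by simp only [Finset.mem_product, Finset.mem_Icc] at hz; omega)
        (by simp only [Finset.mem_product, Finset.mem_Icc] at hz; omega)
        (by simp only [Finset.mem_product, Finset.mem_Icc] at hz; omega)
        (by simp only [Finset.mem_product, Finset.mem_Icc] at hz; omega)
        (by simp only [Finset.mem_product, Finset.mem_Icc] at hz; omega))
      ?_ ?_ ?_ ?_ ?_
    · intro p hp
      simp only [Finset.mem_filter, Finset.mem_univ, true_and] at hp
      have h1 := p.1.1.isLt; have h2 := p.1.2.isLt
      simp only [Finset.mem_product, Finset.mem_Icc]
      omega
    · intro z hz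
      simp only [Finset.mem_product, Finset.mem_Icc] at hz
      simp only [Finset.mem_filter, Finset.mem_univ, true_and, elt_fst, elt_snd]
      omega
    · intro p hp
      exact ext' _ _ (by simp) (by simp)
    · intro z hz
      simp
    · intro p hp
      simp only [Finset.mem_filter, Finset.mem_univ, true_and] at hp
      exact Tin_eq hI p (by omega) (by omega) (by omega)
  rw [hT, hS1, hS2]
  rw [Finset.sum_product, Finset.sum_product]
  rw [← Finset.Ico_add_one_right_eq_Icc i n, Finset.sum_Ico_eq_sum_range]
  rw [← Finset.Ico_add_one_right_eq_Icc (i+1) n, Finset.sum_Ico_eq_sum_range]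
  have hin : ∀ x, (∑ y ∈ Icc b n, F n I x y)
      = ∑ t ∈ Finset.range (n+1-b), F n I x (b+t) := by
    intro x
    rw [← Finset.Ico_add_one_right_eq_Icc b n, Finset.sum_Ico_eq_sum_range]
  have hin2 : ∀ x, (∑ y ∈ Icc (b+1) n, G n I x y)
      = ∑ t ∈ Finset.range (n+1-b), G n I x (b+t+1) := by
    intro x
    rw [← Finset.Ico_add_one_right_eq_Icc (b+1) n, Finset.sum_Ico_eq_sum_range]
    have hN : n + 1 - b = (n + 1 - (b+1)) + 1 := by omega
    rw [hN, Finset.sum_range_succ]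
    have hlast : G n I x (b + (n + 1 - (b+1)) + 1) = G n I x (n+1) := by
      congr 1; omega
    rw [hlast, G_right, add_zero]
    apply Finset.sum_congr rfl
    intro t ht
    congr 1; omega
  simp only [hin, hin2]
  -- pad the G-sum with a vanishing top row
  have hpad : (∑ s ∈ Finset.range (n+1-(i+1)), ∑ t ∈ Finset.range (n+1-b), G n I (i+1+s) (b+t+1))
      = ∑ s ∈ Finset.range (n+1-i), ∑ t ∈ Finset.range (n+1-b), G n I (i+s+1) (b+t+1) := by
    have hN : n + 1 - i = (n + 1 - (i+1)) + 1 := by omega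
    rw [hN, Finset.sum_range_succ]
    have hlast : (∑ t ∈ Finset.range (n+1-b), G n I (i + (n+1-(i+1)) + 1) (b+t+1)) = 0 := by
      apply Finset.sum_eq_zero
      intro t ht
      have e : i + (n+1-(i+1)) + 1 = n + 1 := by omega
      rw [e, G_top]
    rw [hlast, add_zero]
    apply Finset.sum_congr rfl
    intro s hs
    apply Finset.sum_congr rfl
    intro t ht
    congr 1
    omega
  rw [hpad]
  rw [add_sub_assoc, ← Finset.sum_sub_distrib]
  have hrow : ∀ s ∈ Finset.range (n+1-i),
      ((∑ t ∈ Finset.range (n+1-b), F n I (i+s) (b+t))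
        - ∑ t ∈ Finset.range (n+1-b), G n I (i+s+1) (b+t+1))
      = (if M n I (i+s) b then (1:ℝ) else 0) - (if M n I (i+s+1) b then 1 else 0) := by
    intro s hs
    rw [← Finset.sum_sub_distrib]
    have hc : (∑ t ∈ Finset.range (n+1-b), (F n I (i+s) (b+t) - G n I (i+s+1) (b+t+1)))
        = ∑ t ∈ Finset.range (n+1-b), (H n I (i+s) (b+t) - H n I (i+s) (b+(t+1))) := by
      apply Finset.sum_congr rfl
      intro t ht
      exact key hI (by omega) (by omega) (by omega)
    rw [hc, Finset.sum_range_sub' (fun t => H n I (i+s) (b+t))]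
    have hz : b + (n+1-b) = n + 1 := by omega
    rw [hz, H_right, sub_zero]
    exact H_eq hI (by omega) (by omega) (by omega)
  rw [Finset.sum_congr rfl hrow]
  have hsplit : ∀ s, ((if M n I (i+s) b then (1:ℝ) else 0) - (if M n I (i+s+1) b then 1 else 0))
      = (fun x => if M n I (i+x) b then (1:ℝ) else 0) s
        - (fun x => if M n I (i+x) b then (1:ℝ) else 0) (s+1) := by
    intro s
    simp only []
    congr 2
  rw [Finset.sum_congr rfl (fun s _ => hsplit s),
    Finset.sum_range_sub' (fun x => if M n I (i+x) b then (1:ℝ) else 0)]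
  have hz : i + (n+1-i) = n + 1 := by omega
  rw [hz]
  simp only [add_zero]
  rw [if_neg (M_top b)]
  by_cases h : M n I i b <;> simp [h]
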